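/- arXiv:2003.02968 — 3 statements merged into one kernel-verified Lean document; each statement's English description precedes it below -/
import Mathlib

section
/- Let α : ℝ → ℝ be a locally Lipschitz extended class-K∞ function (strictly increasing, α(0) = 0, α(r) → ∞ as r → ∞, α(r) → -∞ as r → -∞), and suppose y : ℝ≥0 → ℝ is differentiable with ẏ(t) ≥ -α(y(t)) and y(0) < 0. Then y is nondecreasing wherever y < 0, y(t) ≥ y(0) for all t, and y(t) → 0 as t → ∞ provided y remains bounded above by 0; hence the set {y ≥ 0} is asymptotically attractive. -/
open Real Set Filter

/-- Scalar asymptotic-stability claim of the CBF theorem: with an extended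
class-K∞ function `α`, a trajectory with `ẏ ≥ -α(y)` and `y 0 < 0` is
nondecreasing wherever it is negative, bounded below by `y 0`, and tends to `0`
provided it stays nonpositive. -/
theorem cbf_asymptotic_attractivity
    (α : ℝ → ℝ) (hαlip : LocallyLipschitz α) (hαmono : StrictMono α)
    (hα0 : α 0 = 0) (hαtop : Tendsto α atTop atTop) (hαbot : Tendsto α atBot atBot)
    (y : ℝ → ℝ) (hy : Differentiable ℝ y)
    (hineq : ∀ t ≥ (0:ℝ), deriv y t ≥ -α (y t))
    (hy0 : y 0 < 0) :
    (∀ s t, 0 ≤ s → s ≤ t → (∀ u ∈ Set.Icc s t, y u < 0) → y s ≤ y t) ∧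
    (∀ t ≥ (0:ℝ), y 0 ≤ y t) ∧
    ((∀ t ≥ (0:ℝ), y t ≤ 0) → Tendsto y atTop (nhds 0)) := by
  -- Part 1: monotone where negative
  have part1 : ∀ s t, 0 ≤ s → s ≤ t → (∀ u ∈ Set.Icc s t, y u < 0) → y s ≤ y t := by
    intro s t hs hst hneg
    have hsm : StrictMonoOn y (Set.Icc s t) := by
      apply strictMonoOn_of_deriv_pos (convex_Icc s t) hy.continuous.continuousOn
      intro u hu
      rw [interior_Icc] at hu
      have hu0 : (0:ℝ) ≤ u := le_of_lt (lt_of_le_of_lt hs hu.1)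
      have hyu : y u < 0 := hneg u ⟨le_of_lt hu.1, le_of_lt hu.2⟩
      have : α (y u) < 0 := by
        have := hαmono hyu
        rwa [hα0] at this
      have := hineq u hu0
      linarith
    exact hsm.monotoneOn (Set.left_mem_Icc.2 hst) (Set.right_mem_Icc.2 hst) hst
  -- Key lemma: values can't drop below a negative threshold
  have key : ∀ s t, 0 ≤ s → s ≤ t → ∀ c, c < 0 → c ≤ y s → c ≤ y t := by
    intro s t hs hst c hc hcs
    by_contra h
    push_neg at h
    -- find a point where y = c
    have hcont : ContinuousOn y (Set.Icc s t) := hy.continuous.continuousOn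
    have hmem : c ∈ Set.Icc (y t) (y s) := ⟨le_of_lt h, hcs⟩
    obtain ⟨u0, hu0, hyu0⟩ := intermediate_value_Icc' hst hcont hmem
    set S : Set ℝ := Set.Icc s t ∩ y ⁻¹' {c} with hS
    have hScomp : IsCompact S :=
      isCompact_Icc.inter_right (isClosed_singleton.preimage hy.continuous)
    have hSne : S.Nonempty := ⟨u0, hu0, hyu0⟩
    set s' := sSup S with hs'
    have hs'mem : s' ∈ S := hScomp.sSup_mem hSne
    have hs'Icc : s' ∈ Set.Icc s t := hs'mem.1
    have hys' : y s' = c := hs'mem.2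
    have hneg : ∀ u ∈ Set.Icc s' t, y u < 0 := by
      intro u hu
      rcases eq_or_lt_of_le hu.1 with rfl | hlt
      · rw [hys']; exact hc
      · by_contra hge
        push_neg at hge
        have hcu : c ≤ y u := le_trans (le_of_lt hc) hge
        have hmem2 : c ∈ Set.Icc (y t) (y u) := ⟨le_of_lt h, hcu⟩
        obtain ⟨v, hv, hyv⟩ := intermediate_value_Icc' hu.2 hy.continuous.continuousOn hmem2
        have hvS : v ∈ S := ⟨⟨le_trans hs'Icc.1 (le_trans (le_of_lt hlt) hv.1), hv.2⟩, hyv⟩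
        have : v ≤ s' := le_csSup hScomp.bddAbove hvS
        have : u ≤ s' := le_trans hv.1 this
        exact absurd this (not_le.2 hlt)
    have := part1 s' t (le_trans hs hs'Icc.1) hs'Icc.2 hneg
    rw [hys'] at this
    linarith
  -- Part 2
  have part2 : ∀ t ≥ (0:ℝ), y 0 ≤ y t := fun t ht => key 0 t le_rfl ht (y 0) hy0 le_rfl
  refine ⟨part1, part2, ?_⟩
  -- Part 3
  intro hnp
  -- y is nondecreasing on [0, ∞)
  have mono : ∀ s t, 0 ≤ s → s ≤ t → y s ≤ y t := by
    intro s t hs hst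
    by_contra h
    push_neg at h
    have hys0 : y s ≤ 0 := hnp s hs
    rcases lt_or_eq_of_le hys0 with hlt | heq
    · exact absurd (key s t hs hst (y s) hlt le_rfl) (not_le.2 h)
    · have hyt : y t < 0 := heq ▸ h
      have : y t / 2 ≤ y t := key s t hs hst (y t / 2) (by linarith) (by linarith [heq])
      linarith
  -- linear growth lemma
  have growth : ∀ δ : ℝ, 0 < δ → (∀ u ≥ (0:ℝ), δ ≤ deriv y u) →
      ∀ t ≥ (0:ℝ), y 0 + δ * t ≤ y t := by
    intro δ hδ hd t ht
    have hg : MonotoneOn (fun u => y u - δ * u) (Set.Ici (0:ℝ)) := by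
      apply monotoneOn_of_deriv_nonneg (convex_Ici 0)
        ((hy.continuous.sub (continuous_const.mul continuous_id')).continuousOn)
      · exact fun u _ => ((hy u).sub (differentiableAt_id.const_mul δ)).differentiableWithinAt
      · intro u hu
        rw [interior_Ici] at hu
        have hder : HasDerivAt (fun u => y u - δ * u) (deriv y u - δ) u := by
          exact ((hy u).hasDerivAt.sub ((hasDerivAt_id u).const_mul δ)).congr_deriv (by ring)
        change 0 ≤ deriv (fun u => y u - δ * u) u
        rw [hder.deriv]
        have := hd u (le_of_lt hu)
        linarith
    have := hg (Set.self_mem_Ici) (Set.mem_Ici.2 ht) ht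
    simp only [mul_zero, sub_zero] at this
    linarith
  rw [Metric.tendsto_atTop]
  intro ε hε
  -- find T with y T > -ε
  have hT : ∃ T ≥ (0:ℝ), -ε < y T := by
    by_contra h
    push_neg at h
    have hδ : 0 < -α (-ε) := by
      have : α (-ε) < α 0 := hαmono (by linarith)
      rw [hα0] at this; linarith
    have hd : ∀ u ≥ (0:ℝ), -α (-ε) ≤ deriv y u := by
      intro u hu
      have h1 : α (y u) ≤ α (-ε) := hαmono.monotone (h u hu)
      have := hineq u hu
      linarith
    set t := (1 - y 0) / (-α (-ε)) with htdef
    have ht0 : (0:ℝ) ≤ t := le_of_lt (div_pos (by linarith) hδ)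
    have hgt := growth (-α (-ε)) hδ hd t ht0
    have ht1 : -α (-ε) * t = 1 - y 0 := by
      rw [htdef, mul_comm, div_mul_cancel₀ _ (ne_of_gt hδ)]
    have := h t ht0
    linarith
  obtain ⟨T, hT0, hTε⟩ := hT
  refine ⟨T, fun t ht => ?_⟩
  have ht0 : (0:ℝ) ≤ t := le_trans hT0 ht
  have h1 : -ε < y t := lt_of_lt_of_le hTε (mono T t hT0 ht)
  have h2 : y t ≤ 0 := hnp t ht0
  rw [Real.dist_eq, sub_zero, abs_lt]
  constructor <;> linarith
end

section
/- Let u*(a, b) = max(b, 0)·a/‖a‖² be the minimizer of ‖u‖² subject to aᵀu ≥ b. If a : ℝ → ℝⁿ \ {0} and b : ℝ → ℝ are Lipschitz continuous and ‖a(t)‖ ≥ ε > 0 and |b(t)| ≤ B for all t, then t ↦ u*(a(t), b(t)) is Lipschitz continuous. -/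
lemma inv_sq_smul_lip {E : Type*} [NormedAddCommGroup E] [NormedSpace ℝ E]
    (ε : ℝ) (hε : 0 < ε) (x y : E) (hx : ε ≤ ‖x‖) (hy : ε ≤ ‖y‖) :
    ‖(1 / ‖x‖ ^ 2) • x - (1 / ‖y‖ ^ 2) • y‖ ≤ 3 / ε ^ 2 * ‖x - y‖ := by
  have hx0 : (0:ℝ) < ‖x‖ := lt_of_lt_of_le hε hx
  have hy0 : (0:ℝ) < ‖y‖ := lt_of_lt_of_le hε hy
  have key : (1 / ‖x‖ ^ 2) • x - (1 / ‖y‖ ^ 2) • y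
      = (1 / ‖x‖ ^ 2) • (x - y) + (1 / ‖x‖ ^ 2 - 1 / ‖y‖ ^ 2) • y := by
    rw [smul_sub, sub_smul]; abel
  rw [key]
  have h1 : ‖(1 / ‖x‖ ^ 2) • (x - y)‖ = 1 / ‖x‖ ^ 2 * ‖x - y‖ := by
    rw [norm_smul, Real.norm_eq_abs, abs_of_pos (by positivity)]
  have h2 : ‖(1 / ‖x‖ ^ 2 - 1 / ‖y‖ ^ 2) • y‖ = |1 / ‖x‖ ^ 2 - 1 / ‖y‖ ^ 2| * ‖y‖ := by
    rw [norm_smul, Real.norm_eq_abs]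
  have hd : |‖y‖ - ‖x‖| ≤ ‖x - y‖ := by
    rw [abs_sub_comm]; exact abs_norm_sub_norm_le x y
  calc ‖(1 / ‖x‖ ^ 2) • (x - y) + (1 / ‖x‖ ^ 2 - 1 / ‖y‖ ^ 2) • y‖
      ≤ ‖(1 / ‖x‖ ^ 2) • (x - y)‖ + ‖(1 / ‖x‖ ^ 2 - 1 / ‖y‖ ^ 2) • y‖ := norm_add_le _ _
    _ = 1 / ‖x‖ ^ 2 * ‖x - y‖ + |1 / ‖x‖ ^ 2 - 1 / ‖y‖ ^ 2| * ‖y‖ := by rw [h1, h2]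
    _ ≤ 3 / ε ^ 2 * ‖x - y‖ := by
        have heq : |1 / ‖x‖ ^ 2 - 1 / ‖y‖ ^ 2|
            = |‖y‖ - ‖x‖| * (‖y‖ + ‖x‖) / (‖x‖ ^ 2 * ‖y‖ ^ 2) := by
          rw [div_sub_div _ _ (by positivity) (by positivity)]
          rw [abs_div, abs_of_pos (show (0:ℝ) < ‖x‖^2*‖y‖^2 by positivity)]
          congr 1
          rw [one_mul, mul_one]
          have h3 : ‖y‖ ^ 2 - ‖x‖ ^ 2 = (‖y‖ - ‖x‖) * (‖y‖ + ‖x‖) := by ring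
          rw [h3, abs_mul, abs_of_nonneg (by positivity : (0:ℝ) ≤ ‖y‖ + ‖x‖)]
        rw [heq]
        have hXY : ε * ε ≤ ‖x‖ * ‖y‖ := mul_le_mul hx hy hε.le hx0.le
        have hXX : ε * ε ≤ ‖x‖ * ‖x‖ := mul_le_mul hx hx hε.le hx0.le
        have step : |‖y‖ - ‖x‖| * (‖y‖ + ‖x‖) / (‖x‖ ^ 2 * ‖y‖ ^ 2) * ‖y‖
            ≤ 2 / ε ^ 2 * ‖x - y‖ := by
          have : |‖y‖ - ‖x‖| * (‖y‖ + ‖x‖) / (‖x‖ ^ 2 * ‖y‖ ^ 2) * ‖y‖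
              = |‖y‖ - ‖x‖| * ((‖y‖ + ‖x‖) / (‖x‖ ^ 2 * ‖y‖)) := by
            field_simp
          rw [this]
          have hfrac : (‖y‖ + ‖x‖) / (‖x‖ ^ 2 * ‖y‖) ≤ 2 / ε ^ 2 := by
            rw [div_le_div_iff₀ (by positivity) (by positivity)]
            nlinarith [mul_le_mul hXY (le_refl ‖y‖) hy0.le (by positivity : (0:ℝ) ≤ ‖x‖*‖y‖),
              mul_le_mul hXX (le_refl ‖y‖) hy0.le (by positivity : (0:ℝ) ≤ ‖x‖*‖x‖)]
          calc |‖y‖ - ‖x‖| * ((‖y‖ + ‖x‖) / (‖x‖ ^ 2 * ‖y‖))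
              ≤ ‖x - y‖ * (2 / ε ^ 2) :=
                mul_le_mul hd hfrac (by positivity) (norm_nonneg _)
            _ = 2 / ε ^ 2 * ‖x - y‖ := by ring
        have hfirst : 1 / ‖x‖ ^ 2 * ‖x - y‖ ≤ 1 / ε ^ 2 * ‖x - y‖ := by
          apply mul_le_mul_of_nonneg_right _ (norm_nonneg _)
          apply one_div_le_one_div_of_le (by positivity)
          nlinarith
        have h4 : 3 / ε ^ 2 * ‖x - y‖ = 1 / ε ^ 2 * ‖x - y‖ + 2 / ε ^ 2 * ‖x - y‖ := by ring
        linarith [step, hfirst]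

/-- The QP solution map `u*(a, b) = (max b 0 / ‖a‖²) • a` composed with
Lipschitz time-varying data, with `‖a(t)‖` bounded away from zero and `b`
bounded, is Lipschitz in time. -/
theorem qp_solution_lipschitz_in_time {n : ℕ}
    (a : ℝ → EuclideanSpace ℝ (Fin n)) (b : ℝ → ℝ)
    (Ka Kb : NNReal) (haLip : LipschitzWith Ka a) (hbLip : LipschitzWith Kb b)
    (ε B : ℝ) (hε : 0 < ε) (haLb : ∀ t, ε ≤ ‖a t‖) (hbB : ∀ t, |b t| ≤ B) :
    ∃ L : NNReal,
      LipschitzWith L (fun t => (max (b t) 0 / ‖a t‖ ^ 2) • a t) := by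
  set C : ℝ := max B 0 * (3 / ε ^ 2 * Ka) + 1 / ε * Kb with hC
  have hC0 : 0 ≤ C := by positivity
  refine ⟨⟨C, hC0⟩, LipschitzWith.of_dist_le_mul fun t s => ?_⟩
  have hεx := fun t => lt_of_lt_of_le hε (haLb t)
  set m : ℝ → ℝ := fun t => max (b t) 0 with hm
  set v : ℝ → EuclideanSpace ℝ (Fin n) := fun t => (1 / ‖a t‖ ^ 2) • a t with hv
  have hrw : ∀ t, (max (b t) 0 / ‖a t‖ ^ 2) • a t = m t • v t := by
    intro t; rw [hv]; simp only [smul_smul]; congr 1; ring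
  simp only [dist_eq_norm, hrw]
  have hdecomp : m t • v t - m s • v s = m t • (v t - v s) + (m t - m s) • v s := by
    rw [smul_sub, sub_smul]; abel
  rw [hdecomp]
  have hmB : ∀ t, |m t| ≤ max B 0 := by
    intro t
    rw [abs_of_nonneg (le_max_right _ _)]
    exact max_le_max ((le_abs_self _).trans (hbB t)) le_rfl
  have hmlip : |m t - m s| ≤ Kb * |t - s| := by
    calc |m t - m s| ≤ |b t - b s| := abs_max_sub_max_le_abs _ _ _
      _ ≤ Kb * |t - s| := by
          have := hbLip.dist_le_mul t s
          simpa [Real.dist_eq] using this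
  have hvnorm : ‖v s‖ ≤ 1 / ε := by
    have hpos : (0:ℝ) < 1 / ‖a s‖ ^ 2 := one_div_pos.mpr (pow_pos (hεx s) 2)
    rw [hv]
    simp only [norm_smul, Real.norm_eq_abs]
    rw [abs_of_pos hpos, div_mul_eq_mul_div, one_mul,
      div_le_div_iff₀ (pow_pos (hεx s) 2) hε]
    nlinarith [haLb s, hεx s]
  have hvlip : ‖v t - v s‖ ≤ 3 / ε ^ 2 * (Ka * |t - s|) := by
    calc ‖v t - v s‖ ≤ 3 / ε ^ 2 * ‖a t - a s‖ :=
          inv_sq_smul_lip ε hε (a t) (a s) (haLb t) (haLb s)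
      _ ≤ 3 / ε ^ 2 * (Ka * |t - s|) := by
          apply mul_le_mul_of_nonneg_left _ (by positivity)
          have := haLip.dist_le_mul t s
          simpa [dist_eq_norm, Real.dist_eq] using this
  have hdist : dist t s = |t - s| := Real.dist_eq t s
  calc ‖m t • (v t - v s) + (m t - m s) • v s‖
      ≤ ‖m t • (v t - v s)‖ + ‖(m t - m s) • v s‖ := norm_add_le _ _
    _ = |m t| * ‖v t - v s‖ + |m t - m s| * ‖v s‖ := by
        rw [norm_smul, norm_smul, Real.norm_eq_abs, Real.norm_eq_abs]
    _ ≤ max B 0 * (3 / ε ^ 2 * (Ka * |t - s|)) + Kb * |t - s| * (1 / ε) :=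
        add_le_add
          (mul_le_mul (hmB t) hvlip (norm_nonneg _) (le_max_right _ _))
          (mul_le_mul hmlip hvnorm (norm_nonneg _) (by positivity))
    _ = C * |t - s| := by rw [hC]; ring
    _ = C * dist t s := by rw [hdist]
end

section
/- If y : ℝ≥0 → ℝ is differentiable, y(0) ∈ [0, M] for some M > 0, and ẏ(t) ≥ -γ·y(t) whenever y(t) ≤ 0, for some γ > 0, then y(t) ≥ 0 for all t ≥ 0. -/
/-- Nagumo-type scalar invariance: if `y(0) ∈ [0, M]` and `ẏ ≥ -γ y` whenever
`y ≤ 0`, then `y` stays nonnegative for all `t ≥ 0`. -/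
theorem scalar_forward_invariance
    (y : ℝ → ℝ) (hy : Differentiable ℝ y)
    (M : ℝ) (hM : 0 < M) (hy0 : y 0 ∈ Set.Icc 0 M)
    (γ : ℝ) (hγ : 0 < γ)
    (hineq : ∀ t ≥ (0:ℝ), y t ≤ 0 → deriv y t ≥ -γ * y t) :
    ∀ t ≥ (0:ℝ), 0 ≤ y t := by
  intro t ht
  by_contra hlt
  push_neg at hlt
  have hy0' : 0 ≤ y 0 := hy0.1
  have hcont : Continuous y := hy.continuous
  set A : Set ℝ := {u | u ∈ Set.Icc 0 t ∧ 0 ≤ y u} with hA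
  have hAne : A.Nonempty := ⟨0, ⟨le_refl 0, ht⟩, hy0'⟩
  have hAbdd : BddAbove A := ⟨t, fun u hu => hu.1.2⟩
  have hAclosed : IsClosed A := by
    have : A = Set.Icc 0 t ∩ y ⁻¹' Set.Ici 0 := by
      ext u; simp [hA, Set.mem_Ici, and_comm]
    rw [this]
    exact isClosed_Icc.inter (isClosed_Ici.preimage hcont)
  set s := sSup A with hs
  have hsA : s ∈ A := hAclosed.csSup_mem hAne hAbdd
  have hs0 : 0 ≤ s := hsA.1.1
  have hst : s ≤ t := hsA.1.2
  have hys : 0 ≤ y s := hsA.2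
  have hsne : s ≠ t := by intro h; rw [h] at hys; linarith
  have hslt : s < t := lt_of_le_of_ne hst hsne
  have hneg : ∀ u ∈ Set.Ioc s t, y u < 0 := by
    intro u hu
    by_contra h
    push_neg at h
    have hmem : u ∈ A := ⟨⟨le_trans hs0 hu.1.le, hu.2⟩, h⟩
    exact absurd (le_csSup hAbdd hmem) (not_le.mpr hu.1)
  have hys0 : y s ≤ 0 := by
    have hmem : Set.Ioc s t ∈ nhdsWithin s (Set.Ioi s) :=
      Ioc_mem_nhdsGT_of_mem ⟨le_refl s, hslt⟩
    have htend : Filter.Tendsto y (nhdsWithin s (Set.Ioi s)) (nhds (y s)) :=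
      (hcont.continuousWithinAt)
    refine le_of_tendsto htend ?_
    filter_upwards [hmem] with u hu
    exact (hneg u hu).le
  have hyszero : y s = 0 := le_antisymm hys0 hys
  have hyle : ∀ u ∈ Set.Icc s t, y u ≤ 0 := by
    intro u hu
    rcases eq_or_lt_of_le hu.1 with h | h
    · rw [← h]; exact hys0
    · exact (hneg u ⟨h, hu.2⟩).le
  set g : ℝ → ℝ := fun u => y u * Real.exp (γ * u) with hg
  have hgd : ∀ u, HasDerivAt g (deriv y u * Real.exp (γ * u) +
      y u * (Real.exp (γ * u) * γ)) u := by
    intro u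
    have h1 : HasDerivAt (fun x : ℝ => γ * x) γ u := by
      simpa using (hasDerivAt_id u).const_mul γ
    have h2 : HasDerivAt (fun x : ℝ => Real.exp (γ * x)) (Real.exp (γ * u) * γ) u := h1.exp
    exact ((hy u).hasDerivAt).mul h2
  have hmono : MonotoneOn g (Set.Icc s t) := by
    apply monotoneOn_of_deriv_nonneg (convex_Icc s t)
    · exact (Continuous.mul hcont (Real.continuous_exp.comp (continuous_const.mul continuous_id))).continuousOn
    · intro u hu
      exact (hgd u).differentiableAt.differentiableWithinAt
    · intro u hu
      rw [interior_Icc] at hu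
      rw [(hgd u).deriv]
      have hu0 : 0 ≤ u := le_trans hs0 hu.1.le
      have hyu : y u ≤ 0 := (hneg u ⟨hu.1, hu.2.le⟩).le
      have hd := hineq u hu0 hyu
      have hexp : 0 < Real.exp (γ * u) := Real.exp_pos _
      nlinarith [hexp]
  have hgs : g s ≤ g t := hmono ⟨le_refl s, hst⟩ ⟨hst, le_refl t⟩ hst
  have hgs0 : g s = 0 := by simp [hg, hyszero]
  have hgt : g t < 0 := mul_neg_of_neg_of_pos hlt (Real.exp_pos _)
  linarith
end
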